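/- For every dimension d ≥ 1 there is a constant c_d > 0 with the following property. Let S_R, S_B be finite sets in ℝ^d such that S = S_R ∪ S_B is in general position, and set n = min{|S_R|, |S_B|} and N = max{|S_R|, |S_B|}. For each subset V ⊆ S containing at least one red and at least one blue point and such that V (with inherited colors) is strongly separable, let supp(V) denote the support set of V. Then the number of distinct sets supp(V), over all such V, is at most c_d · n · N^d; consequently, the number of distinct values Mar(V) over all such V is also at most c_d · n · N^d. -/

import Mathlib

open scoped RealInnerProductSpace

/-- The hyperplane `{x : ⟪w, x⟫ = c}`. -/
def hplane (d : ℕ) (w : EuclideanSpace ℝ (Fin d)) (c : ℝ) :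
    Set (EuclideanSpace ℝ (Fin d)) :=
  {x | ⟪w, x⟫ = c}

/-- The margin `M_h(T) = min_{a ∈ T} dist(a, h)` of a hyperplane `h` w.r.t. a set `T`. -/
noncomputable def margin (d : ℕ) (T h : Set (EuclideanSpace ℝ (Fin d))) : ℝ :=
  sInf ((fun a => Metric.infDist a h) '' T)

/-- `(w, c)` strictly separates the red set `VR` from the blue set `VB`. -/
def StrictSep (d : ℕ) (VR VB : Set (EuclideanSpace ℝ (Fin d)))
    (w : EuclideanSpace ℝ (Fin d)) (c : ℝ) : Prop :=
  (∀ r ∈ VR, ⟪w, r⟫ < c) ∧ ∀ b ∈ VB, c < ⟪w, b⟫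

/-- A set of points of `ℝ^d` is in general position if every subset of at most `d + 1`
of its points is affinely independent. -/
def InGenPos (d : ℕ) (P : Set (EuclideanSpace ℝ (Fin d))) : Prop :=
  ∀ s : Finset (EuclideanSpace ℝ (Fin d)), ↑s ⊆ P → s.card ≤ d + 1 →
    AffineIndependent ℝ (fun x : s => (x : EuclideanSpace ℝ (Fin d)))

/-- `C` is the support set of the bichromatic dataset `(VR, VB)`: the set of points of
`V = VR ∪ VB` at distance `Mar(V)` from the maximum-margin separator of `V`. -/
def IsSupportSet (d : ℕ) (VR VB : Finset (EuclideanSpace ℝ (Fin d)))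
    (C : Set (EuclideanSpace ℝ (Fin d))) : Prop :=
  ∃ (w : EuclideanSpace ℝ (Fin d)) (c : ℝ), w ≠ 0 ∧ StrictSep d ↑VR ↑VB w c ∧
    (∀ (w' : EuclideanSpace ℝ (Fin d)) (c' : ℝ), w' ≠ 0 → StrictSep d ↑VR ↑VB w' c' →
      margin d (↑VR ∪ ↑VB) (hplane d w' c') ≤ margin d (↑VR ∪ ↑VB) (hplane d w c)) ∧
    C = {a ∈ (↑VR ∪ ↑VB : Set (EuclideanSpace ℝ (Fin d))) |
      Metric.infDist a (hplane d w c) = margin d (↑VR ∪ ↑VB) (hplane d w c)}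

/-- `m` is the separation-margin `Mar(V)` of the bichromatic dataset `(VR, VB)`:
the margin of its maximum-margin separator. -/
def IsMar (d : ℕ) (VR VB : Finset (EuclideanSpace ℝ (Fin d))) (m : ℝ) : Prop :=
  ∃ (w : EuclideanSpace ℝ (Fin d)) (c : ℝ), w ≠ 0 ∧ StrictSep d ↑VR ↑VB w c ∧
    (∀ (w' : EuclideanSpace ℝ (Fin d)) (c' : ℝ), w' ≠ 0 → StrictSep d ↑VR ↑VB w' c' →
      margin d (↑VR ∪ ↑VB) (hplane d w' c') ≤ margin d (↑VR ∪ ↑VB) (hplane d w c)) ∧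
    m = margin d (↑VR ∪ ↑VB) (hplane d w c)


section Comb
variable {α : Type*} [DecidableEq α]

lemma sum_recover_left (P Q : Finset α) (a : α) :
    a ∈ P ↔ (Sum.inl a : α ⊕ α) ∈ (P.image Sum.inl ∪ Q.image Sum.inr) := by
  simp

lemma sum_union_card (P Q : Finset α) :
    (P.image Sum.inl ∪ Q.image Sum.inr).card = P.card + Q.card := by
  rw [Finset.card_union_of_disjoint, Finset.card_image_of_injective _ Sum.inl_injective,
    Finset.card_image_of_injective _ Sum.inr_injective]
  simp [Finset.disjoint_left]

lemma pairs_card_le (k : ℕ) (A B : Finset α) :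
    ((A.powerset ×ˢ B.powerset).filter (fun p => p.1.card + p.2.card ≤ k)).card
      ≤ ∑ j ∈ Finset.range (k+1), (A.card + B.card).choose j := by
  classical
  have hinj : Set.InjOn (fun p : Finset α × Finset α => p.1.image Sum.inl ∪ p.2.image Sum.inr)
      ↑((A.powerset ×ˢ B.powerset).filter (fun p => p.1.card + p.2.card ≤ k)) := by
    intro p hp q hq he
    simp only at he
    ext1
    · ext a
      rw [sum_recover_left p.1 p.2 a, he, ← sum_recover_left]
    · ext a
      have : ∀ (P Q : Finset α), a ∈ Q ↔ (Sum.inr a : α ⊕ α) ∈ (P.image Sum.inl ∪ Q.image Sum.inr) := by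
        intro P Q; simp
      rw [this p.1 p.2, he, ← this]
  calc ((A.powerset ×ˢ B.powerset).filter (fun p => p.1.card + p.2.card ≤ k)).card
      ≤ ((Finset.range (k+1)).biUnion
          (fun j => Finset.powersetCard j (A.image Sum.inl ∪ B.image Sum.inr))).card := by
        apply Finset.card_le_card_of_injOn _ _ hinj
        intro p hp
        simp only [Finset.mem_coe, Finset.mem_filter, Finset.mem_product, Finset.mem_powerset] at hp
        obtain ⟨⟨hpa, hpb⟩, hpc⟩ := hp
        rw [Finset.mem_coe, Finset.mem_biUnion]
        refine ⟨(p.1.image Sum.inl ∪ p.2.image Sum.inr).card, ?_, ?_⟩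
        · rw [Finset.mem_range, sum_union_card]; omega
        · rw [Finset.mem_powersetCard]
          refine ⟨Finset.union_subset_union (Finset.image_subset_image hpa)
            (Finset.image_subset_image hpb), rfl⟩
    _ ≤ ∑ j ∈ Finset.range (k+1), (Finset.powersetCard j (A.image Sum.inl ∪ B.image Sum.inr)).card :=
        Finset.card_biUnion_le
    _ = ∑ j ∈ Finset.range (k+1), (A.card + B.card).choose j := by
        apply Finset.sum_congr rfl
        intro j _
        rw [Finset.card_powersetCard, sum_union_card]

lemma pairs_nonempty_card_le (k : ℕ) (A B : Finset α) :
    ((A.powerset ×ˢ B.powerset).filter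
        (fun p => p.1.Nonempty ∧ p.2.Nonempty ∧ p.1.card + p.2.card ≤ k + 1)).card
      ≤ A.card * (∑ j ∈ Finset.range (k+1), (A.card + B.card).choose j) := by
  classical
  set T := (A.powerset ×ˢ B.powerset).filter (fun p => p.1.card + p.2.card ≤ k) with hT
  have hTcard := pairs_card_le k A B
  rw [← hT] at hTcard
  have key : ∀ p : Finset α × Finset α, p ∈ (A.powerset ×ˢ B.powerset).filter
      (fun p => p.1.Nonempty ∧ p.2.Nonempty ∧ p.1.card + p.2.card ≤ k + 1) →
      ∃ x ∈ p.1, True := by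
    intro p hp
    obtain ⟨_, h1, _, _⟩ := Finset.mem_filter.mp hp
    exact ⟨h1.choose, h1.choose_spec, trivial⟩
  set s : Finset α × Finset α → Finset α :=
    fun p => if h : p.1.Nonempty then {h.choose} else ∅ with hs
  set f : Finset α × Finset α → Finset α × (Finset α × Finset α) :=
    fun p => (s p, (p.1 \ s p, p.2)) with hf
  have hstep := Finset.card_le_card_of_injOn
    (s := (A.powerset ×ˢ B.powerset).filter
        (fun p => p.1.Nonempty ∧ p.2.Nonempty ∧ p.1.card + p.2.card ≤ k + 1))
    (t := (A.image (fun a => ({a} : Finset α))) ×ˢ T) f ?_ ?_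
  · calc _ ≤ _ := hstep
      _ ≤ A.card * ∑ j ∈ Finset.range (k + 1), (A.card + B.card).choose j := by
        rw [Finset.card_product, Finset.card_image_of_injective _ ?_]
        · exact Nat.mul_le_mul_left _ hTcard
        · intro a b hab
          simpa [Finset.singleton_inj] using hab
  · -- maps to
    rintro ⟨P, Q⟩ hp
    simp only [Finset.mem_coe, Finset.mem_filter, Finset.mem_product, Finset.mem_powerset] at hp
    obtain ⟨⟨hPA, hQB⟩, hPne, hQne, hcard⟩ := hp
    have hxP : hPne.choose ∈ P := hPne.choose_spec
    rw [Finset.mem_coe, Finset.mem_product]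
    constructor
    · simp only [hf, hs, dif_pos hPne, Finset.mem_image]
      exact ⟨hPne.choose, hPA hxP, rfl⟩
    · simp only [hf, hs, dif_pos hPne, hT, Finset.mem_filter, Finset.mem_product,
        Finset.mem_powerset]
      refine ⟨⟨(Finset.sdiff_subset).trans hPA, hQB⟩, ?_⟩
      have : (P \ {hPne.choose}).card = P.card - 1 := by
        rw [Finset.sdiff_singleton_eq_erase, Finset.card_erase_of_mem hxP]
      have hP1 : 1 ≤ P.card := Finset.card_pos.mpr hPne
      omega
  · -- injective
    rintro ⟨P₁, Q₁⟩ h₁ ⟨P₂, Q₂⟩ h₂ he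
    simp only [Finset.coe_filter, Set.mem_setOf_eq, Finset.mem_product, Finset.mem_powerset] at h₁ h₂
    obtain ⟨-, hne₁, -, -⟩ := h₁
    obtain ⟨-, hne₂, -, -⟩ := h₂
    simp only [hf, hs, dif_pos hne₁, dif_pos hne₂, Prod.mk.injEq] at he
    obtain ⟨hx, hPd, hQ⟩ := he
    have hxx : hne₁.choose = hne₂.choose := by simpa [Finset.singleton_inj] using hx
    have hP : P₁ = P₂ := by
      have h1 : P₁ = insert hne₁.choose (P₁ \ {hne₁.choose}) := by
        rw [Finset.sdiff_singleton_eq_erase, Finset.insert_erase hne₁.choose_spec]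
      have h2 : P₂ = insert hne₂.choose (P₂ \ {hne₂.choose}) := by
        rw [Finset.sdiff_singleton_eq_erase, Finset.insert_erase hne₂.choose_spec]
      rw [h1, h2, hPd, hxx]
    exact Prod.ext hP hQ

lemma pairs_swap_card (k : ℕ) (A B : Finset α) :
    ((A.powerset ×ˢ B.powerset).filter
        (fun p => p.1.Nonempty ∧ p.2.Nonempty ∧ p.1.card + p.2.card ≤ k)).card
      = ((B.powerset ×ˢ A.powerset).filter
        (fun p => p.1.Nonempty ∧ p.2.Nonempty ∧ p.1.card + p.2.card ≤ k)).card := by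
  apply Finset.card_bij (fun p _ => (p.2, p.1))
  · rintro ⟨P, Q⟩ hp
    simp only [Finset.mem_filter, Finset.mem_product, Finset.mem_powerset] at hp ⊢
    obtain ⟨⟨h1, h2⟩, h3, h4, h5⟩ := hp
    exact ⟨⟨h2, h1⟩, h4, h3, by omega⟩
  · rintro ⟨P₁, Q₁⟩ - ⟨P₂, Q₂⟩ - he
    simpa [Prod.ext_iff, and_comm] using he
  · rintro ⟨P, Q⟩ hp
    refine ⟨(Q, P), ?_, rfl⟩
    simp only [Finset.mem_filter, Finset.mem_product, Finset.mem_powerset] at hp ⊢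
    obtain ⟨⟨h1, h2⟩, h3, h4, h5⟩ := hp
    exact ⟨⟨h2, h1⟩, h4, h3, by omega⟩

lemma sum_choose_le {u : ℕ} (k : ℕ) (hu : 1 ≤ u) :
    ∑ j ∈ Finset.range (k+1), u.choose j ≤ (k+1) * u^k := by
  calc ∑ j ∈ Finset.range (k+1), u.choose j ≤ ∑ j ∈ Finset.range (k+1), u^k := by
        apply Finset.sum_le_sum
        intro j hj
        calc u.choose j ≤ u^j := Nat.choose_le_pow u j
          _ ≤ u^k := Nat.pow_le_pow_right hu (by
              have := Finset.mem_range.mp hj; omega)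
    _ = (k+1) * u^k := by rw [Finset.sum_const, Finset.card_range, smul_eq_mul]

end Comb

lemma ncard_subsets_le {α : Type*} [DecidableEq α] (T : Finset α) :
    {C : Set α | C ⊆ ↑T}.ncard ≤ 2 ^ T.card := by
  have heq : {C : Set α | C ⊆ ↑T} = (fun F : Finset α => (↑F : Set α)) '' ↑T.powerset := by
    ext C
    simp only [Set.mem_setOf_eq, Set.mem_image, Finset.coe_powerset, Set.mem_preimage,
      Set.mem_powerset_iff]
    constructor
    · intro hC
      have hfin : C.Finite := Set.Finite.subset T.finite_toSet hC
      exact ⟨hfin.toFinset, by simpa using hC, by simp⟩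
    · rintro ⟨F, hF, rfl⟩
      simpa using hF
  rw [heq]
  calc ((fun F : Finset α => (↑F : Set α)) '' ↑T.powerset).ncard
      ≤ (↑T.powerset : Set (Finset α)).ncard := Set.ncard_image_le (T.powerset.finite_toSet)
    _ = T.powerset.card := Set.ncard_coe_finset _
    _ = 2 ^ T.card := Finset.card_powerset T

lemma ncard_biUnion_le {ι β : Type*} (I : Finset ι) (Φ : ι → Set β) (K : ℕ)
    (hb : ∀ i ∈ I, (Φ i).ncard ≤ K) :
    (⋃ i ∈ I, Φ i).ncard ≤ I.card * K := by
  classical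
  induction I using Finset.induction with
  | empty => simp
  | insert a s hni ih =>
    rw [Finset.set_biUnion_insert]
    calc (Φ a ∪ ⋃ i ∈ s, Φ i).ncard ≤ (Φ a).ncard + (⋃ i ∈ s, Φ i).ncard :=
          Set.ncard_union_le _ _
      _ ≤ K + s.card * K := by
          have h1 := hb a (Finset.mem_insert_self a s)
          have h2 := ih (fun i hi => hb i (Finset.mem_insert_of_mem hi))
          omega
      _ = (insert a s).card * K := by
          rw [Finset.card_insert_of_notMem hni]; ring

lemma ncard_le_one_of_subsingleton {β : Type*} (S : Set β)
    (h : ∀ x ∈ S, ∀ y ∈ S, x = y) : S.ncard ≤ 1 := by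
  rcases Set.eq_empty_or_nonempty S with rfl | ⟨x, hx⟩
  · simp
  · have : S = {x} := by
      ext y; simp only [Set.mem_singleton_iff]
      exact ⟨fun hy => h y hy x hx, fun hy => hy ▸ hx⟩
    rw [this, Set.ncard_singleton]

lemma exists_split {α : Type*} [DecidableEq α] {CR CB : Finset α} (hdisj : Disjoint CR CB)
    (hCR : CR.Nonempty) (hCB : CB.Nonempty) {k : ℕ} (hk : 2 ≤ k)
    (hbig : k ≤ CR.card + CB.card) :
    ∃ BR BB : Finset α, BR ⊆ CR ∧ BB ⊆ CB ∧ BR.Nonempty ∧ BB.Nonempty ∧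
      BR.card + BB.card = k := by
  obtain ⟨r, hr⟩ := hCR
  obtain ⟨b, hb⟩ := hCB
  have hrb : r ≠ b := fun h => (Finset.disjoint_left.mp hdisj hr) (h ▸ hb)
  have hpair : ({r, b} : Finset α) ⊆ CR ∪ CB := by
    intro x hx
    rcases Finset.mem_insert.mp hx with rfl | hx
    · exact Finset.mem_union_left _ hr
    · rw [Finset.mem_singleton.mp hx]; exact Finset.mem_union_right _ hb
  have hpc : ({r, b} : Finset α).card = 2 := Finset.card_pair hrb
  have hcu : (CR ∪ CB).card = CR.card + CB.card := Finset.card_union_of_disjoint hdisj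
  obtain ⟨B', hB'1, hB'2, hB'3⟩ := Finset.exists_subsuperset_card_eq hpair (n := k - 2 + ({r, b} : Finset α).card) (by omega) (by omega)
  rw [hpc] at hB'3
  refine ⟨B' ∩ CR, B' ∩ CB, Finset.inter_subset_right, Finset.inter_subset_right,
    ⟨r, Finset.mem_inter.mpr ⟨hB'1 (by simp), hr⟩⟩,
    ⟨b, Finset.mem_inter.mpr ⟨hB'1 (by simp), hb⟩⟩, ?_⟩
  have hUnion : (B' ∩ CR) ∪ (B' ∩ CB) = B' := by
    rw [← Finset.inter_union_distrib_left]
    exact Finset.inter_eq_left.mpr hB'2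
  have hdisj2 : Disjoint (B' ∩ CR) (B' ∩ CB) :=
    hdisj.mono Finset.inter_subset_right Finset.inter_subset_right
  have := Finset.card_union_of_disjoint hdisj2
  rw [hUnion] at this
  omega

section GeoAux
variable {d : ℕ}

noncomputable local instance : DecidableEq (EuclideanSpace ℝ (Fin d)) :=
  fun _ _ => Classical.dec _


local notation "E" => EuclideanSpace ℝ (Fin d)

lemma hplane_nonempty {w : E} (hw : w ≠ 0) (c : ℝ) : (hplane d w c).Nonempty := by
  refine ⟨(c / ‖w‖ ^ 2) • w, ?_⟩
  have : ⟪w, (c / ‖w‖ ^ 2) • w⟫ = (c / ‖w‖ ^ 2) * ⟪w, w⟫ := real_inner_smul_right _ _ _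
  have hn : ‖w‖ ≠ 0 := norm_ne_zero_iff.mpr hw
  simp only [hplane, Set.mem_setOf_eq, this, real_inner_self_eq_norm_sq]
  field_simp

lemma infDist_hplane {w : E} (hw : w ≠ 0) (c : ℝ) (x : E) :
    Metric.infDist x (hplane d w c) = |⟪w, x⟫ - c| / ‖w‖ := by
  have hn : (0:ℝ) < ‖w‖ := norm_pos_iff.mpr hw
  apply le_antisymm
  · -- use the explicit foot point
    set y : E := x - ((⟪w, x⟫ - c) / ‖w‖ ^ 2) • w with hy
    have hymem : y ∈ hplane d w c := by
      simp only [hplane, Set.mem_setOf_eq, hy, inner_sub_right, real_inner_smul_right,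
        real_inner_self_eq_norm_sq]
      field_simp
      ring
    have hdist : dist x y = |⟪w, x⟫ - c| / ‖w‖ := by
      rw [dist_eq_norm]
      have : x - y = ((⟪w, x⟫ - c) / ‖w‖ ^ 2) • w := by rw [hy]; abel
      rw [this, norm_smul]
      rw [Real.norm_eq_abs, abs_div, abs_pow, abs_norm]
      field_simp
    rw [← hdist]
    exact Metric.infDist_le_dist_of_mem hymem
  · by_contra hlt
    push_neg at hlt
    rw [Metric.infDist_lt_iff (hplane_nonempty hw c)] at hlt
    obtain ⟨y, hy, hdy⟩ := hlt
    have h1 : |⟪w, x⟫ - c| = |⟪w, x - y⟫| := by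
      rw [inner_sub_right]; rw [hy.out]
    have h2 : |⟪w, x - y⟫| ≤ ‖w‖ * ‖x - y‖ := abs_real_inner_le_norm _ _
    rw [← dist_eq_norm] at h2
    have := h2.trans_lt (by
      calc ‖w‖ * dist x y < ‖w‖ * (|⟪w, x⟫ - c| / ‖w‖) := by
            exact (mul_lt_mul_iff_right₀ hn).mpr hdy
        _ = |⟪w, x⟫ - c| := by field_simp)
    rw [h1] at this; exact lt_irrefl _ this

lemma margin_le_of_mem {V : Finset E} {h : Set E} {x : E} (hx : x ∈ V) :
    margin d ↑V h ≤ Metric.infDist x h := by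
  apply csInf_le ((V.finite_toSet.image _).bddBelow)
  exact Set.mem_image_of_mem _ hx

lemma le_margin {V : Finset E} (hV : V.Nonempty) {h : Set E} {b : ℝ}
    (hb : ∀ x ∈ V, b ≤ Metric.infDist x h) : b ≤ margin d ↑V h := by
  apply le_csInf ((hV.to_set).image _)
  rintro _ ⟨x, hx, rfl⟩
  exact hb x hx

lemma exists_margin_eq {V : Finset E} (hV : V.Nonempty) (h : Set E) :
    ∃ x ∈ V, Metric.infDist x h = margin d ↑V h := by
  have := Set.Nonempty.csInf_mem ((hV.to_set).image (fun a => Metric.infDist a h))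
    (V.finite_toSet.image _)
  obtain ⟨x, hx, hxe⟩ := this
  exact ⟨x, hx, hxe⟩


lemma not_affineIndependent_of_hyperplane {B : Finset E} (hcard : B.card = d + 1)
    {u : E} (hu : u ≠ 0) {t : ℝ} (hB : ∀ p ∈ B, ⟪u, p⟫ = t) :
    ¬ AffineIndependent ℝ (fun x : B => (x : E)) := by
  intro hindep
  have hc : Fintype.card B = d + 1 := by rw [Fintype.card_coe]; exact hcard
  have hrank := hindep.finrank_vectorSpan hc
  have hrange : Set.range (fun x : B => (x : E)) = (B : Set E) := Subtype.range_coe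
  rw [hrange] at hrank
  -- vectorSpan ≤ (span {u})ᗮ
  have hle : vectorSpan ℝ (B : Set E) ≤ (Submodule.span ℝ {u})ᗮ := by
    rw [vectorSpan_def, Submodule.span_le]
    rintro v ⟨p, hp, q, hq, rfl⟩
    rw [SetLike.mem_coe, Submodule.mem_orthogonal_singleton_iff_inner_right]
    have : (⟪u, p⟫ : ℝ) = t := hB p hp
    have h2 : (⟪u, q⟫ : ℝ) = t := hB q hq
    simp [vsub_eq_sub, inner_sub_right, this, h2]
  have h1 : Module.finrank ℝ (Submodule.span ℝ ({u} : Set E)) = 1 := finrank_span_singleton hu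
  have h2 := Submodule.finrank_add_finrank_orthogonal (𝕜 := ℝ) (Submodule.span ℝ ({u} : Set E))
  rw [h1, finrank_euclideanSpace_fin] at h2
  have h3 : Module.finrank ℝ (vectorSpan ℝ (B : Set E)) ≤
      Module.finrank ℝ (Submodule.span ℝ ({u} : Set E))ᗮ :=
    Submodule.finrank_mono hle
  omega

lemma card_le_of_hyperplane {S : Set E} (hGP : InGenPos d S) {u : E} (hu : u ≠ 0) (t : ℝ)
    {F : Finset E} (hFS : ↑F ⊆ S) (hF : ∀ p ∈ F, ⟪u, p⟫ = t) : F.card ≤ d := by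
  by_contra hlt
  push_neg at hlt
  obtain ⟨B, hBF, hBcard⟩ := Finset.exists_subset_card_eq (n := d + 1) hlt
  have hindep := hGP B ((Finset.coe_subset.mpr hBF).trans hFS) (le_of_eq hBcard)
  exact not_affineIndependent_of_hyperplane hBcard hu (fun p hp => hF p (hBF hp)) hindep

lemma slab_unique {S : Set E} (hGP : InGenPos d S) {B : Finset E} (hBS : ↑B ⊆ S)
    (hBcard : B.card = d + 1) {v₁ v₂ : E} {e₁ e₂ : ℝ} {σ : E → ℝ}
    (h1 : ∀ p ∈ B, ⟪v₁, p⟫ - e₁ = σ p) (h2 : ∀ p ∈ B, ⟪v₂, p⟫ - e₂ = σ p) :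
    v₁ = v₂ ∧ e₁ = e₂ := by
  have key : ∀ p ∈ B, ⟪v₁ - v₂, p⟫ = e₁ - e₂ := by
    intro p hp
    have := h1 p hp; have h2' := h2 p hp
    rw [inner_sub_left]; linarith
  by_cases hu : v₁ - v₂ = 0
  · have hv : v₁ = v₂ := sub_eq_zero.mp hu
    refine ⟨hv, ?_⟩
    obtain ⟨p, hp⟩ : B.Nonempty := Finset.card_pos.mp (by omega)
    have := h1 p hp; have h2' := h2 p hp
    rw [hv] at this; linarith
  · exfalso
    have hindep := hGP B hBS (le_of_eq hBcard)
    exact not_affineIndependent_of_hyperplane hBcard hu key hindep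

section

lemma union_coe (VR VB : Finset E) : (↑VR ∪ ↑VB : Set E) = ↑(VR ∪ VB) := by
  simp

lemma margin_pos {VR VB : Finset E} {w : E} {c : ℝ} (hVR : VR.Nonempty) (hVB : VB.Nonempty) (hw : w ≠ 0)
    (hsep : StrictSep d ↑VR ↑VB w c) :
    0 < margin d (↑VR ∪ ↑VB) (hplane d w c) := by
  rw [union_coe]
  obtain ⟨x, hx, hxe⟩ := exists_margin_eq (hVR.mono Finset.subset_union_left) (hplane d w c)
  rw [← hxe, infDist_hplane hw]
  have hn : (0:ℝ) < ‖w‖ := norm_pos_iff.mpr hw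
  apply div_pos _ hn
  rw [abs_pos, sub_ne_zero]
  rcases Finset.mem_union.mp hx with h | h
  · exact ne_of_lt (hsep.1 x (by exact_mod_cast h))
  · exact ne_of_gt (hsep.2 x (by exact_mod_cast h))

/-- If the margin is optimal, some red point attains it. -/
lemma exists_red_attains {VR VB : Finset E} {w : E} {c : ℝ} (hVR : VR.Nonempty) (hVB : VB.Nonempty) (hw : w ≠ 0)
    (hsep : StrictSep d ↑VR ↑VB w c)
    (hopt : ∀ (w' : E) (c' : ℝ), w' ≠ 0 → StrictSep d ↑VR ↑VB w' c' →
      margin d (↑VR ∪ ↑VB) (hplane d w' c') ≤ margin d (↑VR ∪ ↑VB) (hplane d w c)) :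
    ∃ a ∈ VR, Metric.infDist a (hplane d w c) = margin d (↑VR ∪ ↑VB) (hplane d w c) := by
  set m := margin d (↑VR ∪ ↑VB) (hplane d w c) with hm
  have hn : (0:ℝ) < ‖w‖ := norm_pos_iff.mpr hw
  have hmpos : 0 < m := margin_pos hVR hVB hw hsep
  by_contra hno
  push_neg at hno
  set μ := m * ‖w‖ with hμ
  have hμpos : 0 < μ := mul_pos hmpos hn
  -- every red point has c - ⟪w,a⟫ > μ
  have hred : ∀ a ∈ VR, μ < c - ⟪w, a⟫ := by
    intro a ha
    have h1 : m ≤ Metric.infDist a (hplane d w c) := by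
      rw [hm, union_coe]; exact margin_le_of_mem (Finset.mem_union_left _ ha)
    have h2 : Metric.infDist a (hplane d w c) ≠ m := hno a ha
    have h3 : m < Metric.infDist a (hplane d w c) := lt_of_le_of_ne h1 (Ne.symm h2)
    rw [infDist_hplane hw] at h3
    have hlt : ⟪w, a⟫ < c := hsep.1 a (by exact_mod_cast ha)
    rw [abs_of_neg (by linarith)] at h3
    have := (lt_div_iff₀ hn).mp h3
    linarith
  -- take the minimal slack
  obtain ⟨ε, hεmem, hεmin⟩ : ∃ ε ∈ (VR.image (fun a => (c - ⟪w, a⟫) - μ)),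
      ∀ x ∈ (VR.image (fun a => (c - ⟪w, a⟫) - μ)), ε ≤ x := by
    have hne : (VR.image (fun a => (c - ⟪w, a⟫) - μ)).Nonempty := hVR.image _
    exact ⟨_, Finset.min'_mem _ hne, fun x hx => Finset.min'_le _ x hx⟩
  have hεpos : 0 < ε := by
    obtain ⟨a, ha, hae⟩ := Finset.mem_image.mp hεmem
    have := hred a ha; linarith
  have hεle : ∀ a ∈ VR, ε ≤ (c - ⟪w, a⟫) - μ := by
    intro a ha
    exact hεmin _ (Finset.mem_image_of_mem _ ha)
  -- shifted hyperplane
  set c' := c - ε/2 with hc'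
  have hsep' : StrictSep d ↑VR ↑VB w c' := by
    constructor
    · intro r hr
      have := hεle r (by exact_mod_cast hr)
      simp only [hc']; linarith
    · intro b hb
      have := hsep.2 b hb
      simp only [hc']; linarith
  have hmarg : m + ε/(2 * ‖w‖) ≤ margin d (↑VR ∪ ↑VB) (hplane d w c') := by
    rw [union_coe]
    apply le_margin (hVR.mono Finset.subset_union_left)
    intro x hx
    rw [infDist_hplane hw]
    rcases Finset.mem_union.mp hx with h | h
    · have h1 := hεle x h
      have : μ + ε/2 ≤ c' - ⟪w, x⟫ := by simp only [hc']; linarith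
      have habs : μ + ε/2 ≤ |⟪w, x⟫ - c'| := le_trans this (by
        rw [abs_sub_comm]; exact le_abs_self _)
      rw [le_div_iff₀ hn]
      have : (m + ε / (2 * ‖w‖)) * ‖w‖ = μ + ε/2 := by
        field_simp [hμ]; ring
      linarith
    · have hble : m ≤ Metric.infDist x (hplane d w c) := by
        rw [hm, union_coe]; exact margin_le_of_mem (Finset.mem_union_right _ h)
      rw [infDist_hplane hw] at hble
      have hgt : c < ⟪w, x⟫ := hsep.2 x (by exact_mod_cast h)
      rw [abs_of_pos (by linarith)] at hble
      have h2 : μ ≤ ⟪w, x⟫ - c := by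
        have := (le_div_iff₀ hn).mp hble; linarith
      have : μ + ε/2 ≤ ⟪w, x⟫ - c' := by simp only [hc']; linarith
      have habs : μ + ε/2 ≤ |⟪w, x⟫ - c'| := le_trans this (le_abs_self _)
      rw [le_div_iff₀ hn]
      have : (m + ε / (2 * ‖w‖)) * ‖w‖ = μ + ε/2 := by
        field_simp [hμ]; ring
      linarith
  have hcontra := hopt w c' hw hsep'
  have : 0 < ε/(2*‖w‖) := div_pos hεpos (by positivity)
  linarith


lemma pinning_aux {VR VB : Finset E} {w : E} {c : ℝ} (hVR : VR.Nonempty) (hVB : VB.Nonempty)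
    (hw : w ≠ 0) (hsep : StrictSep d ↑VR ↑VB w c)
    (hopt : ∀ (w' : E) (c' : ℝ), w' ≠ 0 → StrictSep d ↑VR ↑VB w' c' →
      margin d (↑VR ∪ ↑VB) (hplane d w' c') ≤ margin d (↑VR ∪ ↑VB) (hplane d w c))
    {u : E} {s : ℝ}
    (hker : ∀ p ∈ VR ∪ VB,
      Metric.infDist p (hplane d w c) = margin d (↑VR ∪ ↑VB) (hplane d w c) → ⟪u, p⟫ = s)
    (hwu : 0 < ⟪w, u⟫) : False := by
  set m := margin d (↑VR ∪ ↑VB) (hplane d w c) with hm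
  have hn : (0:ℝ) < ‖w‖ := norm_pos_iff.mpr hw
  have hmpos : 0 < m := margin_pos hVR hVB hw hsep
  set μ := m * ‖w‖ with hμ
  have hμpos : 0 < μ := mul_pos hmpos hn
  have hu : u ≠ 0 := by
    intro h; rw [h, inner_zero_right] at hwu; exact lt_irrefl _ hwu
  have hnu : (0:ℝ) < ‖u‖ := norm_pos_iff.mpr hu
  -- value identity
  have hval : ∀ (ε : ℝ) (a : E),
      ⟪w - ε • u, a⟫ - (c - ε * s) = (⟪w, a⟫ - c) - ε * (⟪u, a⟫ - s) := by
    intro ε a; rw [inner_sub_left, real_inner_smul_left]; ring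
  -- dist facts for every point of V
  have hdist : ∀ a ∈ VR ∪ VB, μ ≤ |⟪w, a⟫ - c| := by
    intro a ha
    have h1 : m ≤ Metric.infDist a (hplane d w c) := by
      rw [hm, union_coe]; exact margin_le_of_mem ha
    rw [infDist_hplane hw, le_div_iff₀ hn] at h1
    linarith [h1]
  set F := nhdsWithin (0:ℝ) (Set.Ioi 0) with hF
  -- eventually, norms behave
  have hsq : ∀ ε : ℝ, ‖w - ε • u‖^2 = ‖w‖^2 - 2*(ε*⟪w,u⟫) + ε^2*‖u‖^2 := by
    intro ε
    rw [norm_sub_sq_real, real_inner_smul_right, norm_smul, Real.norm_eq_abs, mul_pow, sq_abs]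
  have E1 : ∀ᶠ ε in F, ‖w - ε • u‖^2 < ‖w‖^2 ∧ 0 < ‖w - ε • u‖^2 := by
    set K := min (⟪w,u⟫/‖u‖^2) (‖w‖^2/(4*⟪w,u⟫)) with hK
    have hKpos : 0 < K := lt_min (div_pos hwu (by positivity)) (div_pos (by positivity) (by positivity))
    refine Filter.eventually_of_mem (Ioo_mem_nhdsGT_of_mem ⟨le_refl 0, hKpos⟩) ?_
    rintro ε ⟨hε0, hεK⟩
    have h1 : ε < ⟪w,u⟫/‖u‖^2 := lt_of_lt_of_le hεK (min_le_left _ _)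
    have h2 : ε < ‖w‖^2/(4*⟪w,u⟫) := lt_of_lt_of_le hεK (min_le_right _ _)
    have h1' : ε * ‖u‖^2 < ⟪w,u⟫ := (lt_div_iff₀ (by positivity)).mp h1
    constructor
    · rw [hsq]; nlinarith
    · rw [hsq]; nlinarith [(lt_div_iff₀ (by positivity : (0:ℝ) < 4*⟪w,u⟫)).mp h2]
  -- eventually, red points stay deep on the negative side
  have E2 : ∀ᶠ ε in F, ∀ a ∈ VR, ⟪w - ε • u, a⟫ - (c - ε * s) ≤ -μ := by
    rw [Filter.eventually_all_finset]
    intro a ha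
    by_cases hsup : Metric.infDist a (hplane d w c) = m
    · have hus : ⟪u, a⟫ = s := hker a (Finset.mem_union_left _ ha) hsup
      have hwa : ⟪w, a⟫ - c = -μ := by
        rw [infDist_hplane hw] at hsup
        have hneg : ⟪w, a⟫ < c := hsep.1 a (by exact_mod_cast ha)
        rw [abs_of_neg (by linarith), div_eq_iff (ne_of_gt hn)] at hsup
        linarith
      apply Filter.Eventually.of_forall
      intro ε; rw [hval, hus, hwa]; simp
    · have hlt : ⟪w, a⟫ - c < -μ := by
        have h1 := hdist a (Finset.mem_union_left _ ha)
        have hneg : ⟪w, a⟫ < c := hsep.1 a (by exact_mod_cast ha)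
        have h2 : m ≤ Metric.infDist a (hplane d w c) := by
          rw [hm, union_coe]; exact margin_le_of_mem (Finset.mem_union_left _ ha)
        have h3 : m < Metric.infDist a (hplane d w c) := lt_of_le_of_ne h2 (Ne.symm hsup)
        rw [infDist_hplane hw, lt_div_iff₀ hn, abs_of_neg (by linarith)] at h3
        linarith
      have hcont : Continuous (fun ε : ℝ => (⟪w,a⟫ - c) - ε * (⟪u,a⟫ - s)) := by fun_prop
      have := ((hcont.tendsto 0).eventually_lt_const
        (by simpa using hlt : (fun ε : ℝ => (⟪w,a⟫ - c) - ε * (⟪u,a⟫ - s)) 0 < -μ)).filter_mono (nhdsWithin_le_nhds : F ≤ _)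
      filter_upwards [this] with ε hε
      rw [hval]; exact le_of_lt hε
  -- eventually, blue points stay deep on the positive side
  have E3 : ∀ᶠ ε in F, ∀ a ∈ VB, μ ≤ ⟪w - ε • u, a⟫ - (c - ε * s) := by
    rw [Filter.eventually_all_finset]
    intro a ha
    by_cases hsup : Metric.infDist a (hplane d w c) = m
    · have hus : ⟪u, a⟫ = s := hker a (Finset.mem_union_right _ ha) hsup
      have hwa : ⟪w, a⟫ - c = μ := by
        rw [infDist_hplane hw] at hsup
        have hpos : c < ⟪w, a⟫ := hsep.2 a (by exact_mod_cast ha)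
        rw [abs_of_pos (by linarith), div_eq_iff (ne_of_gt hn)] at hsup
        linarith
      apply Filter.Eventually.of_forall
      intro ε; rw [hval, hus, hwa]; simp
    · have hlt : μ < ⟪w, a⟫ - c := by
        have hpos : c < ⟪w, a⟫ := hsep.2 a (by exact_mod_cast ha)
        have h2 : m ≤ Metric.infDist a (hplane d w c) := by
          rw [hm, union_coe]; exact margin_le_of_mem (Finset.mem_union_right _ ha)
        have h3 : m < Metric.infDist a (hplane d w c) := lt_of_le_of_ne h2 (Ne.symm hsup)
        rw [infDist_hplane hw, lt_div_iff₀ hn, abs_of_pos (by linarith)] at h3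
        linarith
      have hcont : Continuous (fun ε : ℝ => (⟪w,a⟫ - c) - ε * (⟪u,a⟫ - s)) := by fun_prop
      have := ((hcont.tendsto 0).eventually_const_lt
        (by simpa using hlt : μ < (fun ε : ℝ => (⟪w,a⟫ - c) - ε * (⟪u,a⟫ - s)) 0)).filter_mono (nhdsWithin_le_nhds : F ≤ _)
      filter_upwards [this] with ε hε
      rw [hval]; exact le_of_lt hε
  have E4 : ∀ᶠ ε in F, (0:ℝ) < ε :=
    Filter.eventually_of_mem self_mem_nhdsWithin (fun x hx => hx)
  obtain ⟨ε, ⟨hsqlt, hsqpos⟩, hEr, hEb, hεpos⟩ := (E1.and (E2.and (E3.and E4))).exists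
  set w' := w - ε • u with hw'
  set c' := c - ε * s with hc'
  have hw'0 : w' ≠ 0 := by
    intro h
    rw [h] at hsqpos; simp at hsqpos
  have hn' : (0:ℝ) < ‖w'‖ := norm_pos_iff.mpr hw'0
  have hltn : ‖w'‖ < ‖w‖ := by nlinarith
  have hsep' : StrictSep d ↑VR ↑VB w' c' := by
    constructor
    · intro r hr
      have := hEr r (by exact_mod_cast hr); simp only [hw', hc'] at *; linarith
    · intro b hb
      have := hEb b (by exact_mod_cast hb); simp only [hw', hc'] at *; linarith
  have hmarg : μ/‖w'‖ ≤ margin d (↑VR ∪ ↑VB) (hplane d w' c') := by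
    rw [union_coe]
    apply le_margin (hVR.mono Finset.subset_union_left)
    intro x hx
    rw [infDist_hplane hw'0, div_le_div_iff₀ hn' hn']
    rcases Finset.mem_union.mp hx with h | h
    · have := hEr x h
      have habs : μ ≤ |⟪w', x⟫ - c'| := by
        rw [abs_sub_comm]; refine le_trans ?_ (le_abs_self _); linarith
      nlinarith
    · have := hEb x h
      have habs : μ ≤ |⟪w', x⟫ - c'| := le_trans (by linarith) (le_abs_self _)
      nlinarith
  have hgt : μ/‖w‖ < μ/‖w'‖ := div_lt_div_of_pos_left hμpos hn' hltn
  have hmw : μ/‖w‖ = m := by rw [hμ]; field_simp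
  have := hopt w' c' hw'0 hsep'
  linarith

lemma pinning {VR VB : Finset E} {w : E} {c : ℝ} (hVR : VR.Nonempty) (hVB : VB.Nonempty)
    (hw : w ≠ 0) (hsep : StrictSep d ↑VR ↑VB w c)
    (hopt : ∀ (w' : E) (c' : ℝ), w' ≠ 0 → StrictSep d ↑VR ↑VB w' c' →
      margin d (↑VR ∪ ↑VB) (hplane d w' c') ≤ margin d (↑VR ∪ ↑VB) (hplane d w c))
    {u : E} {s : ℝ}
    (hker : ∀ p ∈ VR ∪ VB,
      Metric.infDist p (hplane d w c) = margin d (↑VR ∪ ↑VB) (hplane d w c) → ⟪u, p⟫ = s) :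
    ⟪w, u⟫ = 0 := by
  by_contra h0
  refine pinning_aux hVR hVB hw hsep hopt (u := ⟪w,u⟫ • u) (s := ⟪w,u⟫ * s) ?_ ?_
  · intro p hp hdp
    rw [real_inner_smul_left, hker p hp hdp]
  · rw [real_inner_smul_right]
    exact mul_self_pos.mpr h0


lemma hplane_neg (w : E) (c : ℝ) : hplane d (-w) (-c) = hplane d w c := by
  ext x
  simp only [hplane, Set.mem_setOf_eq, inner_neg_left]
  constructor <;> intro h <;> linarith

lemma exists_blue_attains {VR VB : Finset E} {w : E} {c : ℝ} (hVR : VR.Nonempty)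
    (hVB : VB.Nonempty) (hw : w ≠ 0) (hsep : StrictSep d ↑VR ↑VB w c)
    (hopt : ∀ (w' : E) (c' : ℝ), w' ≠ 0 → StrictSep d ↑VR ↑VB w' c' →
      margin d (↑VR ∪ ↑VB) (hplane d w' c') ≤ margin d (↑VR ∪ ↑VB) (hplane d w c)) :
    ∃ a ∈ VB, Metric.infDist a (hplane d w c) = margin d (↑VR ∪ ↑VB) (hplane d w c) := by
  have hcomm : (↑VB ∪ ↑VR : Set E) = (↑VR ∪ ↑VB : Set E) := Set.union_comm _ _
  have hsep' : StrictSep d ↑VB ↑VR (-w) (-c) := by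
    constructor
    · intro b hb; have := hsep.2 b hb; rw [inner_neg_left]; linarith
    · intro r hr; have := hsep.1 r hr; rw [inner_neg_left]; linarith
  have hopt' : ∀ (w' : E) (c' : ℝ), w' ≠ 0 → StrictSep d ↑VB ↑VR w' c' →
      margin d (↑VB ∪ ↑VR) (hplane d w' c') ≤ margin d (↑VB ∪ ↑VR) (hplane d (-w) (-c)) := by
    intro w' c' hw' hsep2
    have hsep3 : StrictSep d ↑VR ↑VB (-w') (-c') := by
      constructor
      · intro r hr; have := hsep2.2 r hr; rw [inner_neg_left]; linarith
      · intro b hb; have := hsep2.1 b hb; rw [inner_neg_left]; linarith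
    have h4 := hopt (-w') (-c') (neg_ne_zero.mpr hw') hsep3
    rw [hplane_neg] at h4
    rw [hplane_neg, hcomm]
    exact h4
  obtain ⟨a, ha, hae⟩ := exists_red_attains hVB hVR (neg_ne_zero.mpr hw) hsep' hopt'
  rw [hplane_neg, hcomm] at hae
  exact ⟨a, ha, hae⟩

lemma supp_structure {VR VB : Finset E} {w : E} {c : ℝ} (hVR : VR.Nonempty) (hVB : VB.Nonempty)
    (hw : w ≠ 0) (hsep : StrictSep d ↑VR ↑VB w c)
    (hopt : ∀ (w' : E) (c' : ℝ), w' ≠ 0 → StrictSep d ↑VR ↑VB w' c' →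
      margin d (↑VR ∪ ↑VB) (hplane d w' c') ≤ margin d (↑VR ∪ ↑VB) (hplane d w c)) :
    ∃ (CR CB : Finset E) (v : E) (e : ℝ),
      CR ⊆ VR ∧ CB ⊆ VB ∧ CR.Nonempty ∧ CB.Nonempty ∧
      ({a ∈ (↑VR ∪ ↑VB : Set E) | Metric.infDist a (hplane d w c)
          = margin d (↑VR ∪ ↑VB) (hplane d w c)} = ↑(CR ∪ CB)) ∧
      v ≠ 0 ∧
      (∀ p ∈ CR, ⟪v, p⟫ - e = -1) ∧ (∀ p ∈ CB, ⟪v, p⟫ - e = 1) ∧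
      margin d (↑VR ∪ ↑VB) (hplane d w c) = 1 / ‖v‖ ∧
      (∀ u s, (∀ p ∈ CR ∪ CB, ⟪u, p⟫ = s) → ⟪v, u⟫ = 0) := by
  set m := margin d (↑VR ∪ ↑VB) (hplane d w c) with hm
  have hn : (0:ℝ) < ‖w‖ := norm_pos_iff.mpr hw
  have hmpos : 0 < m := margin_pos hVR hVB hw hsep
  set μ := m * ‖w‖ with hμ
  have hμpos : 0 < μ := mul_pos hmpos hn
  refine ⟨VR.filter (fun a => Metric.infDist a (hplane d w c) = m),
    VB.filter (fun a => Metric.infDist a (hplane d w c) = m),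
    (1/μ) • w, c/μ, Finset.filter_subset _ _, Finset.filter_subset _ _,
    ?_, ?_, ?_, ?_, ?_, ?_, ?_, ?_⟩
  · obtain ⟨a, ha, hae⟩ := exists_red_attains hVR hVB hw hsep hopt
    exact ⟨a, Finset.mem_filter.mpr ⟨ha, hae⟩⟩
  · obtain ⟨a, ha, hae⟩ := exists_blue_attains hVR hVB hw hsep hopt
    exact ⟨a, Finset.mem_filter.mpr ⟨ha, hae⟩⟩
  · ext a
    simp only [Set.mem_setOf_eq, Set.mem_union, Finset.coe_union, Finset.coe_filter,
      Finset.mem_coe, Finset.mem_union, Finset.mem_filter]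
    tauto
  · exact smul_ne_zero (by positivity) hw
  · intro p hp
    obtain ⟨hpV, hpd⟩ := Finset.mem_filter.mp hp
    have hneg : ⟪w, p⟫ < c := hsep.1 p (by exact_mod_cast hpV)
    rw [infDist_hplane hw, abs_of_neg (by linarith), div_eq_iff (ne_of_gt hn)] at hpd
    rw [real_inner_smul_left]
    have hval : ⟪w,p⟫ - c = -μ := by rw [hμ]; linarith
    have hrw : (1/μ) * ⟪w,p⟫ - c/μ = (⟪w,p⟫ - c)/μ := by ring
    rw [hrw, hval, neg_div, div_self (ne_of_gt hμpos)]
  · intro p hp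
    obtain ⟨hpV, hpd⟩ := Finset.mem_filter.mp hp
    have hpos : c < ⟪w, p⟫ := hsep.2 p (by exact_mod_cast hpV)
    rw [infDist_hplane hw, abs_of_pos (by linarith), div_eq_iff (ne_of_gt hn)] at hpd
    rw [real_inner_smul_left]
    have hval : ⟪w,p⟫ - c = μ := by rw [hμ]; linarith
    have hrw : (1/μ) * ⟪w,p⟫ - c/μ = (⟪w,p⟫ - c)/μ := by ring
    rw [hrw, hval, div_self (ne_of_gt hμpos)]
  · rw [norm_smul, Real.norm_eq_abs, abs_of_pos (by positivity : (0:ℝ) < 1/μ)]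
    rw [hμ]
    field_simp
  · intro u s hker
    rw [real_inner_smul_left]
    have hz : ⟪w, u⟫ = 0 := by
      apply pinning hVR hVB hw hsep hopt (u := u) (s := s)
      intro p hp hdp
      apply hker
      rcases Finset.mem_union.mp hp with h | h
      · exact Finset.mem_union_left _ (Finset.mem_filter.mpr ⟨h, hdp⟩)
      · exact Finset.mem_union_right _ (Finset.mem_filter.mpr ⟨h, hdp⟩)
    rw [hz, mul_zero]


lemma Phi_bound {SR SB : Finset E} (hGP : InGenPos d (↑SR ∪ ↑SB)) {BR BB : Finset E}
    (hBRS : BR ⊆ SR) (hBBS : BB ⊆ SB) (hBRne : BR.Nonempty) (hBBne : BB.Nonempty)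
    (hcard : BR.card + BB.card = d + 1) :
    ({C : Set E | ∃ (v : E) (e : ℝ), (∀ q ∈ BR, ⟪v, q⟫ - e = -1) ∧
        (∀ q ∈ BB, ⟪v, q⟫ - e = 1) ∧
        C ⊆ {a : E | (a ∈ SR ∨ a ∈ SB) ∧ |⟪v, a⟫ - e| = 1}}).Finite ∧
    ({C : Set E | ∃ (v : E) (e : ℝ), (∀ q ∈ BR, ⟪v, q⟫ - e = -1) ∧
        (∀ q ∈ BB, ⟪v, q⟫ - e = 1) ∧
        C ⊆ {a : E | (a ∈ SR ∨ a ∈ SB) ∧ |⟪v, a⟫ - e| = 1}}).ncard ≤ 2^(2*d) := by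
  set Φ := {C : Set E | ∃ (v : E) (e : ℝ), (∀ q ∈ BR, ⟪v, q⟫ - e = -1) ∧
      (∀ q ∈ BB, ⟪v, q⟫ - e = 1) ∧
      C ⊆ {a : E | (a ∈ SR ∨ a ∈ SB) ∧ |⟪v, a⟫ - e| = 1}} with hΦ
  rcases Set.eq_empty_or_nonempty Φ with he | ⟨C₀, v₀, e₀, h₀R, h₀B, -⟩
  · rw [he]; exact ⟨Set.finite_empty, by simp⟩
  · obtain ⟨q₁, hq₁⟩ := hBRne
    obtain ⟨q₂, hq₂⟩ := hBBne
    have hv₀ : v₀ ≠ 0 := by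
      intro h
      have e1 := h₀R q₁ hq₁
      have e2 := h₀B q₂ hq₂
      rw [h, inner_zero_left] at e1 e2
      linarith
    have hdisj : Disjoint BR BB := by
      rw [Finset.disjoint_left]
      intro q hqR hqB
      have e1 := h₀R q hqR
      have e2 := h₀B q hqB
      linarith
    have hBcard : (BR ∪ BB).card = d + 1 := by
      rw [Finset.card_union_of_disjoint hdisj]; exact hcard
    have hBsub : ↑(BR ∪ BB) ⊆ (↑SR ∪ ↑SB : Set E) := by
      rw [Finset.coe_union]
      exact Set.union_subset_union (Finset.coe_subset.mpr hBRS) (Finset.coe_subset.mpr hBBS)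
    have huniq : ∀ (v : E) (e : ℝ), (∀ q ∈ BR, ⟪v, q⟫ - e = -1) →
        (∀ q ∈ BB, ⟪v, q⟫ - e = 1) → v = v₀ ∧ e = e₀ := by
      intro v e hvR hvB
      refine slab_unique hGP hBsub hBcard (σ := fun q => if q ∈ BR then (-1:ℝ) else 1) ?_ ?_
      · intro p hp
        rcases Finset.mem_union.mp hp with h | h
        · rw [if_pos h]; exact hvR p h
        · rw [if_neg (Finset.disjoint_right.mp hdisj h)]; exact hvB p h
      · intro p hp
        rcases Finset.mem_union.mp hp with h | h
        · rw [if_pos h]; exact h₀R p h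
        · rw [if_neg (Finset.disjoint_right.mp hdisj h)]; exact h₀B p h
    set T := (SR ∪ SB).filter (fun a => |⟪v₀, a⟫ - e₀| = 1) with hT
    have hTcard : T.card ≤ 2*d := by
      set T₁ := (SR ∪ SB).filter (fun a => ⟪v₀, a⟫ = e₀ + 1) with hT₁
      set T₂ := (SR ∪ SB).filter (fun a => ⟪v₀, a⟫ = e₀ - 1) with hT₂
      have hsub : T ⊆ T₁ ∪ T₂ := by
        intro a ha
        obtain ⟨haS, habs⟩ := Finset.mem_filter.mp ha
        rcases (abs_eq (by norm_num : (0:ℝ) ≤ 1)).mp habs with h | h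
        · exact Finset.mem_union_left _ (Finset.mem_filter.mpr ⟨haS, by linarith⟩)
        · exact Finset.mem_union_right _ (Finset.mem_filter.mpr ⟨haS, by linarith⟩)
      have hc1 : T₁.card ≤ d := by
        apply card_le_of_hyperplane hGP hv₀ (e₀ + 1)
        · intro a ha
          have := (Finset.mem_filter.mp (by exact_mod_cast ha)).1
          rw [← Finset.coe_union]
          exact_mod_cast this
        · intro p hp; exact (Finset.mem_filter.mp hp).2
      have hc2 : T₂.card ≤ d := by
        apply card_le_of_hyperplane hGP hv₀ (e₀ - 1)
        · intro a ha
          have := (Finset.mem_filter.mp (by exact_mod_cast ha)).1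
          rw [← Finset.coe_union]
          exact_mod_cast this
        · intro p hp; exact (Finset.mem_filter.mp hp).2
      calc T.card ≤ (T₁ ∪ T₂).card := Finset.card_le_card hsub
        _ ≤ T₁.card + T₂.card := Finset.card_union_le _ _
        _ ≤ 2*d := by omega
    have hsubset : Φ ⊆ {C : Set E | C ⊆ ↑T} := by
      rintro C ⟨v, e, hvR, hvB, hCsub⟩
      obtain ⟨rfl, rfl⟩ := huniq v e hvR hvB
      intro a ha
      have := hCsub ha
      rw [hT, Finset.coe_filter]
      simp only [Set.mem_setOf_eq, Finset.mem_union]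
      exact ⟨this.1, this.2⟩
    refine ⟨(T.finite_toSet.finite_subsets).subset hsubset, ?_⟩
    calc Φ.ncard ≤ {C : Set E | C ⊆ ↑T}.ncard :=
          Set.ncard_le_ncard hsubset (T.finite_toSet.finite_subsets)
      _ ≤ 2^T.card := ncard_subsets_le T
      _ ≤ 2^(2*d) := Nat.pow_le_pow_right (by norm_num) hTcard

lemma Psi1_bound (BR BB : Finset E) :
    ({m : ℝ | ∃ (v : E) (e : ℝ), (∀ q ∈ BR, ⟪v, q⟫ - e = -1) ∧
        (∀ q ∈ BB, ⟪v, q⟫ - e = 1) ∧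
        (∀ (u : E) (s : ℝ), (∀ q ∈ BR ∪ BB, ⟪u, q⟫ = s) → ⟪v, u⟫ = 0) ∧
        m = 1/‖v‖}).Subsingleton := by
  rintro m₁ ⟨v₁, e₁, hR₁, hB₁, hpin₁, rfl⟩ m₂ ⟨v₂, e₂, hR₂, hB₂, hpin₂, rfl⟩
  have hker : ∀ q ∈ BR ∪ BB, ⟪v₁ - v₂, q⟫ = e₁ - e₂ := by
    intro q hq
    rw [inner_sub_left]
    rcases Finset.mem_union.mp hq with h | h
    · have := hR₁ q h; have := hR₂ q h; linarith
    · have := hB₁ q h; have := hB₂ q h; linarith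
  have h1 : ⟪v₁, v₁ - v₂⟫ = 0 := hpin₁ _ _ hker
  have h2 : ⟪v₂, v₁ - v₂⟫ = 0 := hpin₂ _ _ hker
  have h3 : ⟪v₁ - v₂, v₁ - v₂⟫ = (0:ℝ) := by
    rw [inner_sub_left, h1, h2]; ring
  have h4 : v₁ = v₂ := sub_eq_zero.mp (inner_self_eq_zero.mp h3)
  rw [h4]

lemma Psi2_bound {SR SB : Finset E} (hGP : InGenPos d (↑SR ∪ ↑SB)) {BR BB : Finset E}
    (hBRS : BR ⊆ SR) (hBBS : BB ⊆ SB)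
    (hcard : BR.card + BB.card = d + 1) :
    ({m : ℝ | ∃ (v : E) (e : ℝ), (∀ q ∈ BR, ⟪v, q⟫ - e = -1) ∧
        (∀ q ∈ BB, ⟪v, q⟫ - e = 1) ∧ m = 1/‖v‖}).Subsingleton := by
  rintro m₁ ⟨v₁, e₁, hR₁, hB₁, rfl⟩ m₂ ⟨v₂, e₂, hR₂, hB₂, rfl⟩
  have hdisj : Disjoint BR BB := by
    rw [Finset.disjoint_left]
    intro q hqR hqB
    have := hR₁ q hqR; have := hB₁ q hqB; linarith
  have hBcard : (BR ∪ BB).card = d + 1 := by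
    rw [Finset.card_union_of_disjoint hdisj]; exact hcard
  have hBsub : ↑(BR ∪ BB) ⊆ (↑SR ∪ ↑SB : Set E) := by
    rw [Finset.coe_union]
    exact Set.union_subset_union (Finset.coe_subset.mpr hBRS) (Finset.coe_subset.mpr hBBS)
  have huniq := slab_unique hGP hBsub hBcard (σ := fun q => if q ∈ BR then (-1:ℝ) else 1)
    (v₁ := v₁) (e₁ := e₁) (v₂ := v₂) (e₂ := e₂) ?_ ?_
  · rw [huniq.1]
  · intro p hp
    rcases Finset.mem_union.mp hp with h | h
    · rw [if_pos h]; exact hR₁ p h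
    · rw [if_neg (Finset.disjoint_right.mp hdisj h)]; exact hB₁ p h
  · intro p hp
    rcases Finset.mem_union.mp hp with h | h
    · rw [if_pos h]; exact hR₂ p h
    · rw [if_neg (Finset.disjoint_right.mp hdisj h)]; exact hB₂ p h

end

end GeoAux

section MainProof

variable {d : ℕ}
local notation "E" => EuclideanSpace ℝ (Fin d)

theorem stmt11_aux (d : ℕ) (hd : 1 ≤ d) :
    ∃ cd : ℝ, 0 < cd ∧
      ∀ SR SB : Finset (EuclideanSpace ℝ (Fin d)),
        InGenPos d (↑SR ∪ ↑SB) →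
        ({C : Set (EuclideanSpace ℝ (Fin d)) |
            ∃ VR ⊆ SR, ∃ VB ⊆ SB, VR.Nonempty ∧ VB.Nonempty ∧
              IsSupportSet d VR VB C}.ncard : ℝ) ≤
          cd * (min SR.card SB.card : ℕ) * ((max SR.card SB.card : ℕ) : ℝ) ^ d ∧
        ({m : ℝ | ∃ VR ⊆ SR, ∃ VB ⊆ SB, VR.Nonempty ∧ VB.Nonempty ∧
              IsMar d VR VB m}.ncard : ℝ) ≤
          cd * (min SR.card SB.card : ℕ) * ((max SR.card SB.card : ℕ) : ℝ) ^ d := by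
  classical
  set cdN : ℕ := (d+1) * 2^d * (1 + 2^(2*d)) with hcdN
  have hcdNpos : 0 < cdN := by positivity
  refine ⟨(cdN : ℝ), by exact_mod_cast hcdNpos, ?_⟩
  intro SR SB hGP
  set n := min SR.card SB.card with hn
  set N := max SR.card SB.card with hN
  by_cases hRB : SR = ∅ ∨ SB = ∅
  · have hempty : ∀ (P : Finset (EuclideanSpace ℝ (Fin d)) →
        Finset (EuclideanSpace ℝ (Fin d)) → Prop),
        ¬ ∃ VR ⊆ SR, ∃ VB ⊆ SB, VR.Nonempty ∧ VB.Nonempty ∧ P VR VB := by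
      rintro P ⟨VR, hVR, VB, hVB, hne1, hne2, -⟩
      rcases hRB with h | h
      · rw [h, Finset.subset_empty] at hVR; exact Finset.not_nonempty_empty (hVR ▸ hne1)
      · rw [h, Finset.subset_empty] at hVB; exact Finset.not_nonempty_empty (hVB ▸ hne2)
    have hpos : (0:ℝ) ≤ (cdN : ℝ) * (n : ℕ) * ((N : ℕ) : ℝ)^d := by positivity
    constructor
    · have : {C : Set (EuclideanSpace ℝ (Fin d)) |
          ∃ VR ⊆ SR, ∃ VB ⊆ SB, VR.Nonempty ∧ VB.Nonempty ∧ IsSupportSet d VR VB C} = ∅ := by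
        ext C
        simp only [Set.mem_setOf_eq, Set.mem_empty_iff_false, iff_false]
        exact hempty (fun VR VB => IsSupportSet d VR VB C)
      rw [this]; simpa using hpos
    · have : {m : ℝ |
          ∃ VR ⊆ SR, ∃ VB ⊆ SB, VR.Nonempty ∧ VB.Nonempty ∧ IsMar d VR VB m} = ∅ := by
        ext m
        simp only [Set.mem_setOf_eq, Set.mem_empty_iff_false, iff_false]
        exact hempty (fun VR VB => IsMar d VR VB m)
      rw [this]; simpa using hpos
  · push_neg at hRB
    have hSRne : SR.Nonempty := hRB.1
    have hSBne : SB.Nonempty := hRB.2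
    have hR1 : 1 ≤ SR.card := Finset.card_pos.mpr hSRne
    have hB1 : 1 ≤ SB.card := Finset.card_pos.mpr hSBne
    have hN1 : 1 ≤ N := le_trans hR1 (le_max_left _ _)
    set 𝒜 : Finset (Finset (EuclideanSpace ℝ (Fin d)) × Finset (EuclideanSpace ℝ (Fin d))) := (SR.powerset ×ˢ SB.powerset).filter
      (fun p => p.1.Nonempty ∧ p.2.Nonempty ∧ p.1.card + p.2.card ≤ d + 1) with h𝒜
    set 𝒥 : Finset (Finset (EuclideanSpace ℝ (Fin d)) × Finset (EuclideanSpace ℝ (Fin d))) := 𝒜.filter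
      (fun p => p.1.card + p.2.card = d + 1) with h𝒥
    have hJA : 𝒥 ⊆ 𝒜 := Finset.filter_subset _ _
    -- cardinality of the index sets
    have hsumle : ∑ j ∈ Finset.range (d+1), (SR.card + SB.card).choose j
        ≤ (d+1) * (SR.card + SB.card)^d := sum_choose_le d (by omega)
    have hA1 : 𝒜.card ≤ SR.card * ((d+1) * (SR.card + SB.card)^d) :=
      le_trans (pairs_nonempty_card_le d SR SB)
        (Nat.mul_le_mul_left _ hsumle)
    have hA2 : 𝒜.card ≤ SB.card * ((d+1) * (SR.card + SB.card)^d) := by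
      rw [h𝒜, pairs_swap_card (d+1) SR SB]
      refine le_trans (pairs_nonempty_card_le d SB SR) ?_
      apply Nat.mul_le_mul_left
      rw [Nat.add_comm SB.card SR.card]
      exact hsumle
    have hAmin : 𝒜.card ≤ n * ((d+1) * (SR.card + SB.card)^d) := by
      rcases le_total SR.card SB.card with h | h
      · rw [hn, min_eq_left h]; exact hA1
      · rw [hn, min_eq_right h]; exact hA2
    have hu2N : SR.card + SB.card ≤ 2 * N := by
      have := le_max_left SR.card SB.card
      have := le_max_right SR.card SB.card
      omega
    have hAfinal : 𝒜.card ≤ n * ((d+1) * (2*N)^d) := by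
      refine le_trans hAmin ?_
      exact Nat.mul_le_mul_left _ (Nat.mul_le_mul_left _ (Nat.pow_le_pow_left hu2N d))
    -- the main ncard bounds (in ℕ)
    have hSuppBound : {C : Set (EuclideanSpace ℝ (Fin d)) |
        ∃ VR ⊆ SR, ∃ VB ⊆ SB, VR.Nonempty ∧ VB.Nonempty ∧ IsSupportSet d VR VB C}.ncard
        ≤ 𝒜.card * (1 + 2^(2*d)) := by
      classical
      set Φ : Finset (EuclideanSpace ℝ (Fin d)) × Finset (EuclideanSpace ℝ (Fin d)) →
          Set (Set (EuclideanSpace ℝ (Fin d))) := fun p =>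
        {C | ∃ (v : EuclideanSpace ℝ (Fin d)) (e : ℝ),
          (∀ q ∈ p.1, ⟪v, q⟫ - e = -1) ∧ (∀ q ∈ p.2, ⟪v, q⟫ - e = 1) ∧
          C ⊆ {a : EuclideanSpace ℝ (Fin d) | (a ∈ SR ∨ a ∈ SB) ∧ |⟪v, a⟫ - e| = 1}} with hΦdef
      have hΦ : ∀ p ∈ 𝒥, (Φ p).Finite ∧ (Φ p).ncard ≤ 2^(2*d) := by
        intro p hp
        obtain ⟨hp𝒜, hpcard⟩ := Finset.mem_filter.mp hp
        obtain ⟨hmem, hp1ne, hp2ne, -⟩ := Finset.mem_filter.mp hp𝒜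
        obtain ⟨hp1, hp2⟩ := Finset.mem_product.mp hmem
        exact Phi_bound hGP (Finset.mem_powerset.mp hp1) (Finset.mem_powerset.mp hp2)
          hp1ne hp2ne hpcard
      have hsub : {C : Set (EuclideanSpace ℝ (Fin d)) |
          ∃ VR ⊆ SR, ∃ VB ⊆ SB, VR.Nonempty ∧ VB.Nonempty ∧ IsSupportSet d VR VB C} ⊆
          ((fun p : Finset (EuclideanSpace ℝ (Fin d)) × Finset (EuclideanSpace ℝ (Fin d)) =>
            (↑(p.1 ∪ p.2) : Set (EuclideanSpace ℝ (Fin d)))) '' ↑𝒜) ∪ (⋃ p ∈ 𝒥, Φ p) := by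
        rintro C ⟨VR, hVR, VB, hVB, hVRne, hVBne, w, c, hw, hsep, hopt, hC⟩
        obtain ⟨CR, CB, v, e, hCRV, hCBV, hCRne, hCBne, hCset, hv, heqR, heqB, hmarg1, hpin⟩ :=
          supp_structure hVRne hVBne hw hsep hopt
        have hCeq : C = ↑(CR ∪ CB) := by rw [hC, hCset]; ext a; simp
        have hdisj : Disjoint CR CB := by
          rw [Finset.disjoint_left]; intro q h1 h2
          have := heqR q h1; have := heqB q h2; linarith
        have hCRS : CR ⊆ SR := hCRV.trans hVR
        have hCBS : CB ⊆ SB := hCBV.trans hVB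
        by_cases hsmall : CR.card + CB.card ≤ d + 1
        · left
          refine ⟨(CR, CB), ?_, hCeq.symm⟩
          simp only [Finset.mem_coe, h𝒜, Finset.mem_filter, Finset.mem_product,
            Finset.mem_powerset]
          exact ⟨⟨hCRS, hCBS⟩, hCRne, hCBne, hsmall⟩
        · right
          push_neg at hsmall
          obtain ⟨BR, BB, hBR, hBB, hBRne, hBBne, hBcard⟩ :=
            exists_split hdisj hCRne hCBne (k := d+1) (by omega) (by omega)
          rw [Set.mem_iUnion₂]
          refine ⟨(BR, BB), ?_, v, e, (fun q hq => heqR q (hBR hq)),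
            (fun q hq => heqB q (hBB hq)), ?_⟩
          · simp only [h𝒥, h𝒜, Finset.mem_filter, Finset.mem_product, Finset.mem_powerset]
            exact ⟨⟨⟨hBR.trans hCRS, hBB.trans hCBS⟩, hBRne, hBBne, le_of_eq hBcard⟩, hBcard⟩
          · intro a ha
            rw [hCeq] at ha
            rcases Finset.mem_union.mp (Finset.mem_coe.mp ha) with h | h
            · exact ⟨Or.inl (hCRS h), by rw [heqR a h]; norm_num⟩
            · exact ⟨Or.inr (hCBS h), by rw [heqB a h]; norm_num⟩
      have hfin2 : (⋃ p ∈ 𝒥, Φ p).Finite :=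
        Set.Finite.biUnion 𝒥.finite_toSet (fun p hp => (hΦ p hp).1)
      have hfin1 : (((fun p : Finset (EuclideanSpace ℝ (Fin d)) ×
          Finset (EuclideanSpace ℝ (Fin d)) =>
          (↑(p.1 ∪ p.2) : Set (EuclideanSpace ℝ (Fin d)))) '' ↑𝒜)).Finite :=
        𝒜.finite_toSet.image _
      have himg : (((fun p : Finset (EuclideanSpace ℝ (Fin d)) ×
          Finset (EuclideanSpace ℝ (Fin d)) =>
          (↑(p.1 ∪ p.2) : Set (EuclideanSpace ℝ (Fin d)))) '' ↑𝒜)).ncard ≤ 𝒜.card := by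
        exact le_of_le_of_eq (Set.ncard_image_le 𝒜.finite_toSet) (Set.ncard_coe_finset _)
      have hJcard : 𝒥.card ≤ 𝒜.card := Finset.card_le_card hJA
      calc {C : Set (EuclideanSpace ℝ (Fin d)) |
            ∃ VR ⊆ SR, ∃ VB ⊆ SB, VR.Nonempty ∧ VB.Nonempty ∧ IsSupportSet d VR VB C}.ncard
          ≤ (((fun p : Finset (EuclideanSpace ℝ (Fin d)) ×
              Finset (EuclideanSpace ℝ (Fin d)) =>
              (↑(p.1 ∪ p.2) : Set (EuclideanSpace ℝ (Fin d)))) '' ↑𝒜) ∪ (⋃ p ∈ 𝒥, Φ p)).ncard :=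
            Set.ncard_le_ncard hsub (hfin1.union hfin2)
        _ ≤ (((fun p : Finset (EuclideanSpace ℝ (Fin d)) ×
              Finset (EuclideanSpace ℝ (Fin d)) =>
              (↑(p.1 ∪ p.2) : Set (EuclideanSpace ℝ (Fin d)))) '' ↑𝒜)).ncard
            + (⋃ p ∈ 𝒥, Φ p).ncard := Set.ncard_union_le _ _
        _ ≤ 𝒜.card + 𝒥.card * 2^(2*d) :=
            add_le_add himg (ncard_biUnion_le 𝒥 Φ _ (fun p hp => (hΦ p hp).2))
        _ ≤ 𝒜.card + 𝒜.card * 2^(2*d) := by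
            have := Nat.mul_le_mul_right (2^(2*d)) hJcard; omega
        _ = 𝒜.card * (1 + 2^(2*d)) := by ring

    have hMarBound : {m : ℝ |
        ∃ VR ⊆ SR, ∃ VB ⊆ SB, VR.Nonempty ∧ VB.Nonempty ∧ IsMar d VR VB m}.ncard
        ≤ 2 * 𝒜.card := by
      classical
      set Ψ₁ : Finset (EuclideanSpace ℝ (Fin d)) × Finset (EuclideanSpace ℝ (Fin d)) →
          Set ℝ := fun p =>
        {m | ∃ (v : EuclideanSpace ℝ (Fin d)) (e : ℝ),
          (∀ q ∈ p.1, ⟪v, q⟫ - e = -1) ∧ (∀ q ∈ p.2, ⟪v, q⟫ - e = 1) ∧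
          (∀ (u : EuclideanSpace ℝ (Fin d)) (s : ℝ),
            (∀ q ∈ p.1 ∪ p.2, ⟪u, q⟫ = s) → ⟪v, u⟫ = 0) ∧ m = 1/‖v‖} with hΨ₁def
      set Ψ₂ : Finset (EuclideanSpace ℝ (Fin d)) × Finset (EuclideanSpace ℝ (Fin d)) →
          Set ℝ := fun p =>
        {m | ∃ (v : EuclideanSpace ℝ (Fin d)) (e : ℝ),
          (∀ q ∈ p.1, ⟪v, q⟫ - e = -1) ∧ (∀ q ∈ p.2, ⟪v, q⟫ - e = 1) ∧
          m = 1/‖v‖} with hΨ₂def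
      have hΨ₁ : ∀ p, (Ψ₁ p).Subsingleton := fun p => by convert Psi1_bound p.1 p.2
      have hΨ₂ : ∀ p ∈ 𝒥, (Ψ₂ p).Subsingleton := by
        intro p hp
        obtain ⟨hp𝒜, hpcard⟩ := Finset.mem_filter.mp hp
        obtain ⟨hmem, hp1ne, hp2ne, -⟩ := Finset.mem_filter.mp hp𝒜
        obtain ⟨hp1, hp2⟩ := Finset.mem_product.mp hmem
        exact Psi2_bound hGP (Finset.mem_powerset.mp hp1) (Finset.mem_powerset.mp hp2) hpcard
      have hsub : {m : ℝ |
          ∃ VR ⊆ SR, ∃ VB ⊆ SB, VR.Nonempty ∧ VB.Nonempty ∧ IsMar d VR VB m} ⊆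
          (⋃ p ∈ 𝒜, Ψ₁ p) ∪ (⋃ p ∈ 𝒥, Ψ₂ p) := by
        rintro m ⟨VR, hVR, VB, hVB, hVRne, hVBne, w, c, hw, hsep, hopt, hm⟩
        obtain ⟨CR, CB, v, e, hCRV, hCBV, hCRne, hCBne, hCset, hv, heqR, heqB, hmarg1, hpin⟩ :=
          supp_structure hVRne hVBne hw hsep hopt
        have hmeq : m = 1/‖v‖ := by rw [hm, hmarg1]
        have hdisj : Disjoint CR CB := by
          rw [Finset.disjoint_left]; intro q h1 h2
          have := heqR q h1; have := heqB q h2; linarith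
        have hCRS : CR ⊆ SR := hCRV.trans hVR
        have hCBS : CB ⊆ SB := hCBV.trans hVB
        by_cases hsmall : CR.card + CB.card ≤ d + 1
        · left
          rw [Set.mem_iUnion₂]
          refine ⟨(CR, CB), ?_, v, e, heqR, heqB,
              (fun u s h => hpin u s (fun p hp => h p (by simp only [Finset.mem_union] at hp ⊢; exact hp))), hmeq⟩
          simp only [h𝒜, Finset.mem_filter, Finset.mem_product, Finset.mem_powerset]
          exact ⟨⟨hCRS, hCBS⟩, hCRne, hCBne, hsmall⟩
        · right
          push_neg at hsmall
          obtain ⟨BR, BB, hBR, hBB, hBRne, hBBne, hBcard⟩ :=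
            exists_split hdisj hCRne hCBne (k := d+1) (by omega) (by omega)
          rw [Set.mem_iUnion₂]
          refine ⟨(BR, BB), ?_, v, e, (fun q hq => heqR q (hBR hq)),
            (fun q hq => heqB q (hBB hq)), hmeq⟩
          simp only [h𝒥, h𝒜, Finset.mem_filter, Finset.mem_product, Finset.mem_powerset]
          exact ⟨⟨⟨hBR.trans hCRS, hBB.trans hCBS⟩, hBRne, hBBne, le_of_eq hBcard⟩, hBcard⟩
      have hfin1 : (⋃ p ∈ 𝒜, Ψ₁ p).Finite :=
        Set.Finite.biUnion 𝒜.finite_toSet (fun p _ => (hΨ₁ p).finite)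
      have hfin2 : (⋃ p ∈ 𝒥, Ψ₂ p).Finite :=
        Set.Finite.biUnion 𝒥.finite_toSet (fun p hp => (hΨ₂ p hp).finite)
      have hJcard : 𝒥.card ≤ 𝒜.card := Finset.card_le_card hJA
      calc {m : ℝ | ∃ VR ⊆ SR, ∃ VB ⊆ SB, VR.Nonempty ∧ VB.Nonempty ∧ IsMar d VR VB m}.ncard
          ≤ ((⋃ p ∈ 𝒜, Ψ₁ p) ∪ (⋃ p ∈ 𝒥, Ψ₂ p)).ncard :=
            Set.ncard_le_ncard hsub (hfin1.union hfin2)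
        _ ≤ (⋃ p ∈ 𝒜, Ψ₁ p).ncard + (⋃ p ∈ 𝒥, Ψ₂ p).ncard := Set.ncard_union_le _ _
        _ ≤ 𝒜.card * 1 + 𝒥.card * 1 := add_le_add
            (ncard_biUnion_le 𝒜 Ψ₁ 1 (fun p hp =>
              ncard_le_one_of_subsingleton _ (fun x hx y hy => (hΨ₁ p) hx hy)))
            (ncard_biUnion_le 𝒥 Ψ₂ 1 (fun p hp =>
              ncard_le_one_of_subsingleton _ (fun x hx y hy => (hΨ₂ p hp) hx hy)))
        _ ≤ 2 * 𝒜.card := by omega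

    -- final numeric assembly
    have hfin1 : 𝒜.card * (1 + 2^(2*d)) ≤ cdN * n * N^d := by
      calc 𝒜.card * (1 + 2^(2*d)) ≤ (n * ((d+1) * (2*N)^d)) * (1 + 2^(2*d)) :=
            Nat.mul_le_mul_right _ hAfinal
        _ = cdN * n * N^d := by rw [hcdN, Nat.mul_pow]; ring
    have hfin2 : 2 * 𝒜.card ≤ cdN * n * N^d := by
      calc 2 * 𝒜.card ≤ (1 + 2^(2*d)) * (n * ((d+1) * (2*N)^d)) := by
            apply Nat.mul_le_mul _ hAfinal
            have : 1 ≤ 2^(2*d) := Nat.one_le_two_pow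
            omega
        _ = cdN * n * N^d := by rw [hcdN, Nat.mul_pow]; ring
    constructor
    · calc ({C : Set (EuclideanSpace ℝ (Fin d)) |
            ∃ VR ⊆ SR, ∃ VB ⊆ SB, VR.Nonempty ∧ VB.Nonempty ∧
              IsSupportSet d VR VB C}.ncard : ℝ)
          ≤ ((cdN * n * N^d : ℕ) : ℝ) :=
            Nat.cast_le.mpr (le_trans hSuppBound hfin1)
        _ = (cdN : ℝ) * (n : ℕ) * ((N : ℕ) : ℝ)^d := by push_cast; ring
    · calc ({m : ℝ | ∃ VR ⊆ SR, ∃ VB ⊆ SB, VR.Nonempty ∧ VB.Nonempty ∧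
              IsMar d VR VB m}.ncard : ℝ)
          ≤ ((cdN * n * N^d : ℕ) : ℝ) :=
            Nat.cast_le.mpr (le_trans hMarBound hfin2)
        _ = (cdN : ℝ) * (n : ℕ) * ((N : ℕ) : ℝ)^d := by push_cast; ring

end MainProof

/-- For every `d ≥ 1` there is `c_d > 0` such that: if `S = S_R ∪ S_B`
is in general position, `n = min(|S_R|, |S_B|)` and `N = max(|S_R|, |S_B|)`, then the
number of distinct support sets `supp(V)`, over all strongly separable `V ⊆ S` having
both colors, is at most `c_d · n · N^d`; consequently so is the number of distinct
values `Mar(V)`. -/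
theorem stmt_11 (d : ℕ) (hd : 1 ≤ d) :
    ∃ cd : ℝ, 0 < cd ∧
      ∀ SR SB : Finset (EuclideanSpace ℝ (Fin d)),
        InGenPos d (↑SR ∪ ↑SB) →
        ({C : Set (EuclideanSpace ℝ (Fin d)) |
            ∃ VR ⊆ SR, ∃ VB ⊆ SB, VR.Nonempty ∧ VB.Nonempty ∧
              IsSupportSet d VR VB C}.ncard : ℝ) ≤
          cd * (min SR.card SB.card : ℕ) * ((max SR.card SB.card : ℕ) : ℝ) ^ d ∧
        ({m : ℝ | ∃ VR ⊆ SR, ∃ VB ⊆ SB, VR.Nonempty ∧ VB.Nonempty ∧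
              IsMar d VR VB m}.ncard : ℝ) ≤
          cd * (min SR.card SB.card : ℕ) * ((max SR.card SB.card : ℕ) : ℝ) ^ d := by
  exact stmt11_aux d hd
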